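/- The function sin(t) on the interval [−π/2, π/2] cannot be approximated within (2π)^{-2} in the supremum norm by any sum f = f_+ + f_− of a convex increasing function f_+ and a concave increasing function f_− on [−π/2, π/2]: for every such f, sup_{t ∈ [−π/2, π/2]} | sin(t) − f(t) | > (2π)^{-2}. -/

import Mathlib

open Real

set_option maxHeartbeats 1000000 in
/-- The function `sin` on `[-π/2, π/2]` cannot be approximated within `(2π)⁻²` in the
supremum norm by a sum `f = f₊ + f₋` of a convex increasing function `f₊` and a concave
increasing function `f₋` on `[-π/2, π/2]`: for every such `f` there is a point `t` of
the interval with `|sin t - f t| > (2π)⁻²` (i.e. the sup of `|sin - f|` exceeds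
`(2π)⁻²`). -/
theorem sin_not_approximable_by_convex_plus_concave_increasing
    (fp fm : ℝ → ℝ)
    (hfp_conv : ConvexOn ℝ (Set.Icc (-(π / 2)) (π / 2)) fp)
    (hfp_mono : MonotoneOn fp (Set.Icc (-(π / 2)) (π / 2)))
    (hfm_conc : ConcaveOn ℝ (Set.Icc (-(π / 2)) (π / 2)) fm)
    (hfm_mono : MonotoneOn fm (Set.Icc (-(π / 2)) (π / 2))) :
    ∃ t ∈ Set.Icc (-(π / 2)) (π / 2),
      ((2 * π) ^ 2)⁻¹ < |Real.sin t - (fp t + fm t)| := by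
  by_contra hcon
  push_neg at hcon
  set ε : ℝ := ((2 * π) ^ 2)⁻¹ with hε
  have hπ : (3.141592 : ℝ) < π := Real.pi_gt_d6
  have hπ' : π < 3.15 := Real.pi_lt_d2
  -- the six points
  have mA : -(π/2) ∈ Set.Icc (-(π/2)) (π/2) := by constructor <;> linarith
  have mB : -(π/3) ∈ Set.Icc (-(π/2)) (π/2) := by constructor <;> linarith
  have mC : -(π/12) ∈ Set.Icc (-(π/2)) (π/2) := by constructor <;> linarith
  have mD : π/12 ∈ Set.Icc (-(π/2)) (π/2) := by constructor <;> linarith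
  have mE : π/3 ∈ Set.Icc (-(π/2)) (π/2) := by constructor <;> linarith
  have mG : π/2 ∈ Set.Icc (-(π/2)) (π/2) := by constructor <;> linarith
  -- approximation bounds at the six points
  have bA := abs_le.mp (hcon _ mA)
  have bB := abs_le.mp (hcon _ mB)
  have bC := abs_le.mp (hcon _ mC)
  have bD := abs_le.mp (hcon _ mD)
  have bE := abs_le.mp (hcon _ mE)
  have bG := abs_le.mp (hcon _ mG)
  -- monotonicity
  have monp : fp (-(π/2)) ≤ fp (-(π/3)) := hfp_mono mA mB (by linarith)
  have monm : fm (π/3) ≤ fm (π/2) := hfm_mono mE mG (by linarith)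
  -- slope inequalities for fm (concave): slope on [-π/12, π/12] ≤ slope on [-π/2, -π/3]
  have sm1 := hfm_conc.slope_anti_adjacent mA mC (show -(π/2) < -(π/3) by linarith)
      (show -(π/3) < -(π/12) by linarith)
  have sm2 := hfm_conc.slope_anti_adjacent mB mD (show -(π/3) < -(π/12) by linarith)
      (show -(π/12) < π/12 by linarith)
  -- slope inequalities for fp (convex): slope on [-π/12, π/12] ≤ slope on [π/3, π/2]
  have sp1 := hfp_conv.slope_mono_adjacent mC mE (show -(π/12) < π/12 by linarith)
      (show π/12 < π/3 by linarith)
  have sp2 := hfp_conv.slope_mono_adjacent mD mG (show π/12 < π/3 by linarith)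
      (show π/3 < π/2 by linarith)
  have hmslope : (fm (π/12) - fm (-(π/12))) / (π/12 - -(π/12))
      ≤ (fm (-(π/3)) - fm (-(π/2))) / (-(π/3) - -(π/2)) := le_trans sm2 sm1
  have hpslope : (fp (π/12) - fp (-(π/12))) / (π/12 - -(π/12))
      ≤ (fp (π/2) - fp (π/3)) / (π/2 - π/3) := le_trans sp1 sp2
  have hlen1 : (π/12 : ℝ) - -(π/12) = π/6 := by ring
  have hlen2 : (-(π/3) : ℝ) - -(π/2) = π/6 := by ring
  have hlen3 : (π/2 : ℝ) - π/3 = π/6 := by ring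
  rw [hlen1, hlen2] at hmslope
  rw [hlen1, hlen3] at hpslope
  have h6 : (0:ℝ) < π/6 := by linarith
  have hmdiff : fm (π/12) - fm (-(π/12)) ≤ fm (-(π/3)) - fm (-(π/2)) :=
    (div_le_div_iff_of_pos_right h6).mp hmslope
  have hpdiff : fp (π/12) - fp (-(π/12)) ≤ fp (π/2) - fp (π/3) :=
    (div_le_div_iff_of_pos_right h6).mp hpslope
  -- sine values
  have sA : Real.sin (-(π/2)) = -1 := by rw [Real.sin_neg, Real.sin_pi_div_two]
  have sB : Real.sin (-(π/3)) = -(Real.sqrt 3 / 2) := by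
    rw [Real.sin_neg, Real.sin_pi_div_three]
  have sC : Real.sin (-(π/12)) = -Real.sin (π/12) := by rw [Real.sin_neg]
  have sE : Real.sin (π/3) = Real.sqrt 3 / 2 := Real.sin_pi_div_three
  have sG : Real.sin (π/2) = 1 := Real.sin_pi_div_two
  rw [sA] at bA; rw [sB] at bB; rw [sC] at bC; rw [sE] at bE; rw [sG] at bG
  -- the key combined inequality: sin (π/12) ≤ 1 - √3/2 + 3ε
  have key : Real.sin (π/12) ≤ 1 - Real.sqrt 3 / 2 + 3 * ε := by linarith
  -- numeric contradiction
  have hs : π/12 - (π/12)^3/4 < Real.sin (π/12) :=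
    lt_of_le_of_lt (by have : (0:ℝ) ≤ (π/12)^3 := by positivity
                       linarith) (Real.sin_gt_sub_cube (by linarith))
  have h3 : (1.732 : ℝ) ≤ Real.sqrt 3 := by
    rw [show (1.732:ℝ) = Real.sqrt (1.732^2) from (Real.sqrt_sq (by norm_num)).symm]
    exact Real.sqrt_le_sqrt (by norm_num)
  have hεlt : ε < 1/36 := by
    rw [hε]
    rw [inv_lt_comm₀ (by positivity) (by norm_num)]
    nlinarith
  have h1 : Real.sin (π/12) ≤ 0.2175 := by linarith
  have h2 : (0.2572 : ℝ) < Real.sin (π/12) := by nlinarith [hπ, hπ', sq_nonneg π, sq_nonneg (π - 3.15)]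
  linarith
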